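/- For the Case 2 matrix T₀ ∈ M₅(ℂ) with superdiagonal entries (√3, 1/√2, 1/√2, √3), the operator norm ‖T₀‖ = √3, which is strictly greater than ‖S‖ = 2/√3. -/

import Mathlib

open Matrix

noncomputable section

private lemma opnorm_eq_of16 (f : EuclideanSpace ℂ (Fin 5) →L[ℂ] EuclideanSpace ℂ (Fin 5)) {c : ℝ}
    (hc : 0 ≤ c) (hub : ∀ x, ‖f x‖ ≤ c * ‖x‖) (x₀ : EuclideanSpace ℂ (Fin 5)) (hx₀ : ‖x₀‖ = 1)
    (heq : ‖f x₀‖ = c) : ‖f‖ = c := by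
  refine le_antisymm (f.opNorm_le_bound hc hub) ?_
  simpa [heq] using f.unit_le_opNorm x₀ hx₀.le

private lemma normsq_apply16 (A : Matrix (Fin 5) (Fin 5) ℂ) (x : EuclideanSpace ℂ (Fin 5)) :
    ‖Matrix.toEuclideanCLM (𝕜 := ℂ) (n := Fin 5) A x‖ ^ 2
      = ∑ i, ‖(A *ᵥ (WithLp.equiv _ _ x)) i‖ ^ 2 := by
  rw [EuclideanSpace.norm_eq, Real.sq_sqrt (by positivity)]; rfl

private lemma norm_eq_of_sq16 {a c : ℝ} (hc : 0 ≤ c) (ha : 0 ≤ a) (h : a ^ 2 = c ^ 2) : a = c := by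
  nlinarith

set_option maxHeartbeats 1000000 in
theorem stmt16 :
    let T₀ : Matrix (Fin 5) (Fin 5) ℂ :=
      !![0, (Real.sqrt 3 : ℂ), 0, 0, 0;
         0, 0, (1 / Real.sqrt 2 : ℂ), 0, 0;
         0, 0, 0, (1 / Real.sqrt 2 : ℂ), 0;
         0, 0, 0, 0, (Real.sqrt 3 : ℂ);
         0, 0, 0, 0, 0]
    let J : Matrix (Fin 5) (Fin 5) ℂ :=
      !![0, 1, 0, 0, 0;
         0, 0, 1, 0, 0;
         0, 0, 0, 1, 0;
         0, 0, 0, 0, 1;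
         0, 0, 0, 0, 0]
    let S : Matrix (Fin 5) (Fin 5) ℂ := (2 / Real.sqrt 3 : ℝ) • J
    ‖Matrix.toEuclideanCLM (𝕜 := ℂ) (n := Fin 5) T₀‖ = Real.sqrt 3 ∧
      ‖Matrix.toEuclideanCLM (𝕜 := ℂ) (n := Fin 5) S‖ = 2 / Real.sqrt 3 ∧
      Real.sqrt 3 > 2 / Real.sqrt 3 := by
  intro T₀ J S
  have s3 : (Real.sqrt 3) ^ 2 = 3 := Real.sq_sqrt (by norm_num)
  have s2 : (Real.sqrt 2) ^ 2 = 2 := Real.sq_sqrt (by norm_num)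
  have h3 : (0:ℝ) ≤ Real.sqrt 3 := Real.sqrt_nonneg 3
  have h3' : (0:ℝ) < Real.sqrt 3 := Real.sqrt_pos.mpr (by norm_num)
  have hxnorm : ∀ x : EuclideanSpace ℂ (Fin 5), ‖x‖ ^ 2 = ∑ i, ‖x i‖ ^ 2 := by
    intro x; rw [EuclideanSpace.norm_eq, Real.sq_sqrt (by positivity)]
  refine ⟨?_, ?_, ?_⟩
  · apply opnorm_eq_of16 _ h3 ?_ (EuclideanSpace.single 1 1) (by simp)
    · -- equality at e₁
      apply norm_eq_of_sq16 h3 (norm_nonneg _)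
      rw [normsq_apply16, s3, Fin.sum_univ_five]
      simp [T₀, mulVec, dotProduct, Fin.sum_univ_five, Matrix.vecHead, Matrix.vecTail,
        Pi.single_apply, abs_of_nonneg h3, s3]
    · intro x
      have h := normsq_apply16 T₀ x
      have hB : ‖Matrix.toEuclideanCLM (𝕜 := ℂ) (n := Fin 5) T₀ x‖ ^ 2
          ≤ (Real.sqrt 3 * ‖x‖) ^ 2 := by
        rw [h, mul_pow, s3, hxnorm x, Fin.sum_univ_five, Fin.sum_univ_five]
        simp [T₀, mulVec, dotProduct, Fin.sum_univ_five, Matrix.vecHead, Matrix.vecTail,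
          abs_of_nonneg (Real.sqrt_nonneg 3), abs_of_nonneg (Real.sqrt_nonneg 2), mul_pow,
          inv_pow, s3, s2]
        nlinarith [sq_nonneg (‖x 0‖), sq_nonneg (‖x 1‖),
          sq_nonneg (‖x 2‖), sq_nonneg (‖x 3‖),
          sq_nonneg (‖x 4‖)]
      nlinarith [norm_nonneg (Matrix.toEuclideanCLM (𝕜 := ℂ) (n := Fin 5) T₀ x),
        mul_nonneg h3 (norm_nonneg x)]
  · have hcpos : (0:ℝ) ≤ 2 / Real.sqrt 3 := by positivity
    have hcsq : (2 / Real.sqrt 3) ^ 2 = 4 / 3 := by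
      rw [div_pow, s3]; norm_num
    apply opnorm_eq_of16 _ hcpos ?_ (EuclideanSpace.single 1 1) (by simp)
    · apply norm_eq_of_sq16 hcpos (norm_nonneg _)
      rw [normsq_apply16, hcsq, Fin.sum_univ_five]
      simp [S, J, mulVec, dotProduct, Fin.sum_univ_five, Matrix.vecHead, Matrix.vecTail,
        Pi.single_apply, Complex.real_smul, abs_of_nonneg h3, hcsq]
    · intro x
      have h := normsq_apply16 S x
      have hB : ‖Matrix.toEuclideanCLM (𝕜 := ℂ) (n := Fin 5) S x‖ ^ 2
          ≤ (2 / Real.sqrt 3 * ‖x‖) ^ 2 := by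
        rw [h, mul_pow, hcsq, hxnorm x, Fin.sum_univ_five, Fin.sum_univ_five]
        simp [S, J, mulVec, dotProduct, Fin.sum_univ_five, Matrix.vecHead, Matrix.vecTail,
          Complex.real_smul, abs_of_nonneg h3, mul_pow, hcsq]
        nlinarith [sq_nonneg (‖x 0‖), sq_nonneg (‖x 1‖),
          sq_nonneg (‖x 2‖), sq_nonneg (‖x 3‖),
          sq_nonneg (‖x 4‖)]
      nlinarith [norm_nonneg (Matrix.toEuclideanCLM (𝕜 := ℂ) (n := Fin 5) S x),
        mul_nonneg hcpos (norm_nonneg x)]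
  · rw [gt_iff_lt, div_lt_iff₀ h3']
    nlinarith [s3]
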